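/- Let (d_i)_{1≤i≤n} be a martingale difference sequence with respect to a filtration (F_i), with |d_i| ≤ 1 and E(d_i^2 | F_{i−1}) ≤ v almost surely for all i. Then for all λ > 0, P(max_{k ≤ n} |∑_{i=1}^k d_i| > λ) ≤ 2 exp(−λ^2/(2λ + 2nv)). -/

import Mathlib

open MeasureTheory Real Finset

lemma exp_eq_tsum_real (x : ℝ) : Real.exp x = ∑' n : ℕ, x ^ n / (Nat.factorial n) := by
  rw [Real.exp_eq_exp_ℝ, NormedSpace.exp_eq_tsum_div]

lemma exp_sub_eq (x : ℝ) : Real.exp x - 1 - x = ∑' n : ℕ, x ^ (n + 2) / (Nat.factorial (n+2)) := by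
  have h := exp_eq_tsum_real x
  have hs : Summable (fun n : ℕ => x ^ n / (Nat.factorial n)) := Real.summable_pow_div_factorial x
  rw [Summable.tsum_eq_zero_add hs] at h
  rw [Summable.tsum_eq_zero_add (by exact_mod_cast (summable_nat_add_iff 1).2 hs)] at h
  simp only [pow_zero, Nat.factorial_zero, pow_one, Nat.factorial_one] at h
  rw [h]; norm_num

lemma summable_shift (x : ℝ) : Summable (fun n : ℕ => x ^ (n + 2) / (Nat.factorial (n+2))) := by
  exact_mod_cast (summable_nat_add_iff 2).2 (Real.summable_pow_div_factorial x)

lemma expA {t x : ℝ} (ht : 0 ≤ t) (hx : |x| ≤ 1) :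
    Real.exp (t * x) ≤ 1 + t * x + (Real.exp t - 1 - t) * x ^ 2 := by
  have h1 := exp_sub_eq (t * x)
  have h2 := exp_sub_eq t
  have key : (∑' n : ℕ, (t * x) ^ (n + 2) / (Nat.factorial (n+2)))
      ≤ (∑' n : ℕ, t ^ (n + 2) / (Nat.factorial (n+2))) * x ^ 2 := by
    rw [← tsum_mul_right]
    refine Summable.tsum_le_tsum (fun n => ?_) (summable_shift _)
      ((summable_shift t).mul_right _)
    rw [div_mul_eq_mul_div]
    apply div_le_div_of_nonneg_right ?_ (by positivity)
    calc (t * x) ^ (n + 2) ≤ |(t * x) ^ (n + 2)| := le_abs_self _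
      _ = t ^ (n + 2) * |x| ^ (n + 2) := by
          rw [abs_pow, abs_mul, abs_of_nonneg ht, mul_pow]
      _ ≤ t ^ (n + 2) * x ^ 2 := by
          apply mul_le_mul_of_nonneg_left ?_ (by positivity)
          calc |x| ^ (n + 2) ≤ |x| ^ 2 := pow_le_pow_of_le_one (abs_nonneg x) hx (by omega)
            _ = x ^ 2 := sq_abs x
  nlinarith [key, h1, h2]

lemma expB {t : ℝ} (ht0 : 0 ≤ t) (ht1 : t < 1) :
    Real.exp t - 1 - t ≤ t ^ 2 / (2 * (1 - t)) := by
  rw [exp_sub_eq t]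
  have hgeo : Summable (fun n : ℕ => t ^ 2 / 2 * t ^ n) :=
    (summable_geometric_of_lt_one ht0 ht1).mul_left _
  calc (∑' n : ℕ, t ^ (n + 2) / (Nat.factorial (n+2)))
      ≤ ∑' n : ℕ, t ^ 2 / 2 * t ^ n := by
        refine Summable.tsum_le_tsum (fun n => ?_) (summable_shift t) hgeo
        have h2 : (2 : ℝ) ≤ (Nat.factorial (n+2) : ℝ) := by
          exact_mod_cast Nat.succ_le_of_lt (Nat.one_lt_factorial.2 (by omega))
        calc t ^ (n + 2) / (Nat.factorial (n+2) : ℝ) ≤ t ^ (n + 2) / 2 :=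
              div_le_div_of_nonneg_left (pow_nonneg ht0 _) two_pos h2
          _ = t ^ 2 / 2 * t ^ n := by rw [pow_add]; ring
    _ = t ^ 2 / (2 * (1 - t)) := by
        rw [tsum_mul_left, tsum_geometric_of_lt_one ht0 ht1]
        field_simp


lemma stoppedValue_neg' {Ω : Type*} (S : ℕ → Ω → ℝ) (τ : Ω → WithTop ℕ) :
    stoppedValue (-S) τ = -(stoppedValue S τ) := by
  funext ω; simp [stoppedValue]

lemma supermartingale_maximal {Ω : Type*} {m0 : MeasurableSpace Ω} {μ : Measure Ω}
    [IsFiniteMeasure μ] {𝒢 : Filtration ℕ m0} {S : ℕ → Ω → ℝ}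
    (hS : Supermartingale S 𝒢 μ) (hnonneg : ∀ i ω, 0 ≤ S i ω) (ε : NNReal) (n : ℕ) :
    ε • μ {ω | (ε : ℝ) ≤ (range (n + 1)).sup' nonempty_range_add_one fun k => S k ω} ≤
      ENNReal.ofReal (∫ ω, S 0 ω ∂μ) := by
  set τ : Ω → WithTop ℕ := fun ω => (hittingBtwn S {y : ℝ | ↑ε ≤ y} 0 n ω : ℕ) with hτdef
  have hτ : IsStoppingTime 𝒢 τ := hS.stronglyAdapted.adapted.isStoppingTime_hittingBtwn measurableSet_Ici
  have hτle : ∀ ω, τ ω ≤ n := fun ω => by simp only [hτdef]; exact_mod_cast (hittingBtwn_le ω : hittingBtwn S {y : ℝ | (ε : ℝ) ≤ y} 0 n ω ≤ n)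
  have hn : Set.Icc 0 n = {k | k ≤ n} := by ext x; simp
  -- on the event, stoppedValue ≥ ε
  have hon : ∀ ω, ((ε : ℝ) ≤ (range (n + 1)).sup' nonempty_range_add_one fun k => S k ω) →
      (ε : ℝ) ≤ stoppedValue S τ ω := by
    intro x hx
    simp_rw [le_sup'_iff, mem_range, Nat.lt_succ_iff] at hx
    refine stoppedValue_hittingBtwn_mem ?_
    simp only [Set.mem_Icc, zero_le, true_and, Set.mem_ofPred_eq]
    exact let ⟨j, hj₁, hj₂⟩ := hx; ⟨j, hj₁, hj₂⟩
  have hint : Integrable (stoppedValue S τ) μ := by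
    have := (hS.neg.integrable_stoppedValue hτ hτle)
    rw [stoppedValue_neg'] at this
    simpa using this.neg
  have hmeas : MeasurableSet {ω | (ε : ℝ) ≤ (range (n + 1)).sup' nonempty_range_add_one
      fun k => S k ω} :=
    measurableSet_le measurable_const (Finset.measurable_range_sup'' fun m _ =>
      (hS.stronglyMeasurable m).measurable.le (𝒢.le m))
  have h1 : ε • μ {ω | (ε : ℝ) ≤ (range (n + 1)).sup' nonempty_range_add_one fun k => S k ω} ≤
      ENNReal.ofReal (∫ ω in {ω | (ε : ℝ) ≤ (range (n + 1)).sup' nonempty_range_add_one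
        fun k => S k ω}, stoppedValue S τ ω ∂μ) := by
    have h := setIntegral_ge_of_const_le_real hmeas (measure_ne_top _ _) hon hint.integrableOn
    rw [ENNReal.le_ofReal_iff_toReal_le, ENNReal.toReal_smul]
    · exact h
    · exact ENNReal.mul_ne_top (by simp) (measure_ne_top _ _)
    · exact le_trans (mul_nonneg ε.coe_nonneg ENNReal.toReal_nonneg) h
  refine h1.trans (ENNReal.ofReal_le_ofReal ?_)
  have h2 : ∫ ω in {ω | (ε : ℝ) ≤ (range (n + 1)).sup' nonempty_range_add_one fun k => S k ω},
      stoppedValue S τ ω ∂μ ≤ ∫ ω, stoppedValue S τ ω ∂μ := by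
    apply setIntegral_le_integral hint
    filter_upwards with ω
    exact hnonneg _ _
  refine h2.trans ?_
  -- optional stopping for supermartingale
  have h3 := hS.neg.expected_stoppedValue_mono (isStoppingTime_const 𝒢 0) hτ
    (fun ω => WithTop.coe_le_coe.2 (Nat.zero_le _)) hτle
  have e1 : stoppedValue (-S) τ = fun ω => -(stoppedValue S τ ω) := by
    funext ω; simp [stoppedValue]
  have e2 : stoppedValue (-S) (fun _ => WithTop.some (0 : ℕ)) = fun ω => -(S 0 ω) := by
    funext ω; simp [stoppedValue]
  rw [e1, e2] at h3
  simp only [integral_neg, neg_le_neg_iff] at h3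
  exact h3

section OneSided

variable {Ω : Type*} {m0 : MeasurableSpace Ω} (μ : Measure Ω) [IsProbabilityMeasure μ]
    (ℱ : Filtration ℕ m0) (f : ℕ → Ω → ℝ)

theorem oneSided (hf : Martingale f ℱ μ)
    (hf0 : ∀ ω, f 0 ω = 0) (n : ℕ) (v : ℝ) (hv : 0 ≤ v)
    (hbdd : ∀ i, ∀ᵐ ω ∂μ, |f (i + 1) ω - f i ω| ≤ 1)
    (hvar : ∀ i, ∀ᵐ ω ∂μ,
      (μ[fun ω' => (f (i + 1) ω' - f i ω') ^ 2 | ℱ i]) ω ≤ v)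
    (lam : ℝ) (hlam : 0 < lam) (t : ℝ) (ht0 : 0 < t) :
    μ {ω | ∃ k ≤ n, lam < f k ω}
      ≤ ENNReal.ofReal (Real.exp (-(t * lam - (Real.exp t - 1 - t) * v * n))) := by
  set ψ : ℝ := Real.exp t - 1 - t with hψdef
  have hψ : 0 ≤ ψ := by
    have := Real.add_one_le_exp t
    simp only [hψdef]; linarith
  set S : ℕ → Ω → ℝ := fun k ω => Real.exp (t * f k ω - ψ * v * k) with hSdef
  have hS_sm : ∀ k, StronglyMeasurable[ℱ k] (S k) := fun k =>
    (Real.continuous_exp.comp_stronglyMeasurable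
      (((hf.stronglyAdapted k).const_mul t).sub stronglyMeasurable_const))
  -- |f k| ≤ k a.e.
  have hfk : ∀ k, ∀ᵐ ω ∂μ, |f k ω| ≤ k := by
    intro k
    induction k with
    | zero => filter_upwards with ω; simp [hf0 ω]
    | succ k ih =>
      filter_upwards [ih, hbdd k] with ω h1 h2
      push_cast
      calc |f (k+1) ω| = |f k ω + (f (k+1) ω - f k ω)| := by ring_nf
        _ ≤ |f k ω| + |f (k+1) ω - f k ω| := abs_add_le _ _
        _ ≤ k + 1 := add_le_add h1 h2
  have hS_int : ∀ k, Integrable (S k) μ := by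
    intro k
    refine Integrable.mono' (integrable_const (Real.exp (t * k)))
      ((hS_sm k).mono (ℱ.le k)).aestronglyMeasurable ?_
    filter_upwards [hfk k] with ω h
    rw [Real.norm_eq_abs, abs_of_nonneg (Real.exp_nonneg _)]
    apply Real.exp_le_exp.2
    have : t * f k ω ≤ t * k := by
      apply mul_le_mul_of_nonneg_left _ ht0.le
      exact (le_abs_self _).trans h
    nlinarith [mul_nonneg (mul_nonneg hψ hv) (Nat.cast_nonneg (α := ℝ) k)]
  -- key conditional expectation estimate
  have hstep : ∀ i, μ[S (i + 1)|ℱ i] ≤ᵐ[μ] S i := by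
    intro i
    set d : Ω → ℝ := fun ω => f (i + 1) ω - f i ω with hddef
    have hd_sm : StronglyMeasurable d :=
      ((hf.stronglyMeasurable (i+1)).mono (ℱ.le _)).sub
        ((hf.stronglyMeasurable i).mono (ℱ.le _))
    have hdi : Integrable d μ := (hf.integrable (i+1)).sub (hf.integrable i)
    have hd2i : Integrable (fun ω => d ω ^ 2) μ := by
      refine Integrable.mono' (integrable_const 1)
        (hd_sm.pow 2).aestronglyMeasurable ?_
      filter_upwards [hbdd i] with ω h
      rw [Real.norm_eq_abs, abs_pow]
      exact pow_le_one₀ (abs_nonneg _) h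
    have hGint : Integrable (fun ω => Real.exp (t * d ω)) μ := by
      refine Integrable.mono' (integrable_const (Real.exp t))
        (Real.continuous_exp.comp_stronglyMeasurable
          (hd_sm.const_mul t)).aestronglyMeasurable ?_
      filter_upwards [hbdd i] with ω h
      rw [Real.norm_eq_abs, abs_of_nonneg (Real.exp_nonneg _), Real.exp_le_exp]
      calc t * d ω ≤ t * |d ω| := mul_le_mul_of_nonneg_left (le_abs_self _) ht0.le
        _ ≤ t * 1 := mul_le_mul_of_nonneg_left h ht0.le
        _ = t := mul_one t
    -- conditional expectation of d is zero
    have hd0 : μ[d|ℱ i] =ᵐ[μ] 0 := by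
      have h1 : μ[d|ℱ i] =ᵐ[μ] μ[f (i+1)|ℱ i] - μ[f i|ℱ i] :=
        condExp_sub (hf.integrable (i+1)) (hf.integrable i) _
      have h2 : μ[f (i+1)|ℱ i] =ᵐ[μ] f i := hf.condExp_ae_eq (Nat.le_succ i)
      have h3 : μ[f i|ℱ i] = f i :=
        condExp_of_stronglyMeasurable (ℱ.le i) (hf.stronglyAdapted i) (hf.integrable i)
      filter_upwards [h1, h2] with ω hω1 hω2
      simp only [Pi.sub_apply, Pi.zero_apply] at *
      rw [hω1, hω2, h3]; ring
    -- bound on conditional expectation of exp (t d)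
    have hkey : μ[fun ω => Real.exp (t * d ω)|ℱ i] ≤ᵐ[μ] fun _ => Real.exp (ψ * v) := by
      set g : Ω → ℝ := fun ω => 1 + (t * d ω + ψ * d ω ^ 2) with hgdef
      have hgi : Integrable g μ :=
        (integrable_const (1:ℝ)).add ((hdi.const_mul t).add (hd2i.const_mul ψ))
      have hmono : μ[fun ω => Real.exp (t * d ω)|ℱ i] ≤ᵐ[μ] μ[g|ℱ i] := by
        refine condExp_mono hGint hgi ?_
        filter_upwards [hbdd i] with ω h
        have := expA ht0.le h
        simp only [hgdef, hddef, hψdef]; linarith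
      have hg_eq : μ[g|ℱ i] =ᵐ[μ]
          fun ω => 1 + (t * (μ[d|ℱ i]) ω + ψ * (μ[fun ω' => d ω' ^ 2|ℱ i]) ω) := by
        have e1 : μ[g|ℱ i] =ᵐ[μ]
            μ[fun _ => (1:ℝ)|ℱ i] + μ[fun ω => t * d ω + ψ * d ω ^ 2|ℱ i] :=
          condExp_add (integrable_const 1) ((hdi.const_mul t).add (hd2i.const_mul ψ)) _
        have e2 : μ[fun ω => t * d ω + ψ * d ω ^ 2|ℱ i] =ᵐ[μ]
            μ[fun ω => t * d ω|ℱ i] + μ[fun ω => ψ * d ω ^ 2|ℱ i] :=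
          condExp_add (hdi.const_mul t) (hd2i.const_mul ψ) _
        have e3 : μ[fun ω => t * d ω|ℱ i] =ᵐ[μ] fun ω => t * (μ[d|ℱ i]) ω := by
          have := condExp_smul (μ := μ) (m := ℱ i) t d
          simpa [Pi.smul_def, smul_eq_mul] using this
        have e4 : μ[fun ω => ψ * d ω ^ 2|ℱ i] =ᵐ[μ]
            fun ω => ψ * (μ[fun ω' => d ω' ^ 2|ℱ i]) ω := by
          have := condExp_smul (μ := μ) (m := ℱ i) ψ (fun ω => d ω ^ 2)
          simpa [Pi.smul_def, smul_eq_mul] using this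
        have e0 : μ[fun _ => (1:ℝ)|ℱ i] = fun _ => (1:ℝ) := condExp_const (ℱ.le i) 1
        filter_upwards [e1, e2, e3, e4] with ω h1 h2 h3 h4
        simp only [Pi.add_apply] at *
        rw [h1, h2, h3, h4, e0]
      filter_upwards [hmono, hg_eq, hd0, hvar i] with ω h1 h2 h3 h4
      calc (μ[fun ω => Real.exp (t * d ω)|ℱ i]) ω ≤ (μ[g|ℱ i]) ω := h1
        _ = 1 + (t * (μ[d|ℱ i]) ω + ψ * (μ[fun ω' => d ω' ^ 2|ℱ i]) ω) := h2
        _ ≤ 1 + ψ * v := by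
            rw [h3]
            simp only [Pi.zero_apply, mul_zero, zero_add]
            have : ψ * (μ[fun ω' => d ω' ^ 2|ℱ i]) ω ≤ ψ * v :=
              mul_le_mul_of_nonneg_left h4 hψ
            linarith
        _ ≤ Real.exp (ψ * v) := by linarith [Real.add_one_le_exp (ψ * v)]
    -- factor S (i+1) = A * exp (t d)
    set A : Ω → ℝ := fun ω => Real.exp (t * f i ω - ψ * v * (i + 1)) with hAdef
    have hA_sm : StronglyMeasurable[ℱ i] A :=
      Real.continuous_exp.comp_stronglyMeasurable
        (((hf.stronglyAdapted i).const_mul t).sub stronglyMeasurable_const)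
    have hfact : S (i + 1) = fun ω => A ω * Real.exp (t * d ω) := by
      funext ω
      simp only [hSdef, hAdef, hddef, ← Real.exp_add]
      congr 1
      push_cast
      ring
    have hpull : μ[S (i+1)|ℱ i] =ᵐ[μ]
        fun ω => A ω * (μ[fun ω' => Real.exp (t * d ω')|ℱ i]) ω := by
      rw [hfact]
      have hint' : Integrable (A * fun ω => Real.exp (t * d ω)) μ := by
        have he : A * (fun ω => Real.exp (t * d ω)) = S (i+1) := by
          funext ω; rw [hfact]; rfl
        rw [he]; exact hS_int _
      exact condExp_mul_of_stronglyMeasurable_left hA_sm hint' hGint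
    filter_upwards [hpull, hkey] with ω h1 h2
    rw [h1]
    calc A ω * (μ[fun ω' => Real.exp (t * d ω')|ℱ i]) ω
        ≤ A ω * Real.exp (ψ * v) :=
          mul_le_mul_of_nonneg_left h2 (Real.exp_nonneg _)
      _ = S i ω := by
          simp only [hAdef, hSdef, ← Real.exp_add]
          congr 1
          push_cast
          ring
  have hsuper : Supermartingale S ℱ μ :=
    supermartingale_nat (fun k => hS_sm k) hS_int hstep
  -- apply maximal inequality
  set ε : NNReal := (Real.exp (t * lam - ψ * v * n)).toNNReal with hεdef
  have hεcoe : (ε : ℝ) = Real.exp (t * lam - ψ * v * n) :=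
    Real.coe_toNNReal _ (Real.exp_nonneg _)
  have hsub : {ω | ∃ k ≤ n, lam < f k ω} ⊆
      {ω | (ε : ℝ) ≤ (range (n + 1)).sup' nonempty_range_add_one fun k => S k ω} := by
    rintro ω ⟨k, hk, hω⟩
    rw [Set.mem_setOf_eq, le_sup'_iff]
    refine ⟨k, by simp [Nat.lt_succ_iff, hk], ?_⟩
    rw [hεcoe]
    apply Real.exp_le_exp.2
    have h1 : t * lam ≤ t * f k ω := mul_le_mul_of_nonneg_left hω.le ht0.le
    have h2 : ψ * v * k ≤ ψ * v * n := by
      apply mul_le_mul_of_nonneg_left _ (mul_nonneg hψ hv)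
      exact_mod_cast hk
    linarith
  have hS0 : ∫ ω, S 0 ω ∂μ = 1 := by
    have : S 0 = fun _ => 1 := by
      funext ω; simp [hSdef, hf0 ω]
    rw [this]
    simp
  have hmax := supermartingale_maximal hsuper (fun i ω => Real.exp_nonneg _) ε n
  rw [hS0] at hmax
  have hεne : (ε : ENNReal) ≠ 0 := by
    simp only [hεdef, ne_eq, ENNReal.coe_eq_zero, Real.toNNReal_eq_zero, not_le]
    exact Real.exp_pos _
  calc μ {ω | ∃ k ≤ n, lam < f k ω}
      ≤ μ {ω | (ε : ℝ) ≤ (range (n + 1)).sup' nonempty_range_add_one fun k => S k ω} :=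
        measure_mono hsub
    _ ≤ ENNReal.ofReal 1 / ε := by
        rw [ENNReal.le_div_iff_mul_le (Or.inl hεne) (Or.inl ENNReal.coe_ne_top), mul_comm]
        exact hmax
    _ = ENNReal.ofReal (Real.exp (-(t * lam - ψ * v * n))) := by
        rw [Real.exp_neg]
        rw [← hεcoe]
        rw [← ENNReal.ofReal_coe_nnreal, ← ENNReal.ofReal_div_of_pos]
        · rw [hεcoe, one_div]
        · rw [hεcoe]; exact Real.exp_pos _
end OneSided

lemma algChoice {lam c : ℝ} (hlam : 0 < lam) (hc : 0 ≤ c) :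
    ∃ t : ℝ, 0 < t ∧
      lam ^ 2 / (2 * lam + 2 * c) ≤ t * lam - (Real.exp t - 1 - t) * c := by
  refine ⟨lam / (lam + c), by positivity, ?_⟩
  set t := lam / (lam + c) with htdef
  rcases eq_or_lt_of_le hc with h0 | h0
  · have : t = 1 := by rw [htdef, ← h0, add_zero, div_self hlam.ne']
    rw [this, ← h0]
    have h1 : Real.exp 1 - 1 - 1 ≥ 0 := by nlinarith [Real.add_one_le_exp 1]
    rw [mul_zero, add_zero, one_mul, mul_zero, sub_zero, div_le_iff₀ (by linarith)]
    nlinarith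
  · have hlc : 0 < lam + c := by linarith
    have ht0 : 0 ≤ t := by positivity
    have ht1 : t < 1 := by
      rw [htdef, div_lt_one hlc]; linarith
    have hψ := expB ht0 ht1
    have h1mt : 1 - t = c / (lam + c) := by
      rw [htdef]; field_simp; ring
    have key : t * lam - t ^ 2 / (2 * (1 - t)) * c = lam ^ 2 / (2 * lam + 2 * c) := by
      rw [htdef, h1mt]
      field_simp
      ring
    have : (Real.exp t - 1 - t) * c ≤ t ^ 2 / (2 * (1 - t)) * c :=
      mul_le_mul_of_nonneg_right hψ hc
    linarith

theorem stmt_10 {Ω : Type*} {m0 : MeasurableSpace Ω} (μ : Measure Ω) [IsProbabilityMeasure μ]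
    (ℱ : Filtration ℕ m0) (f : ℕ → Ω → ℝ) (hf : Martingale f ℱ μ)
    (hf0 : ∀ ω, f 0 ω = 0) (n : ℕ) (v : ℝ) (hv : 0 ≤ v)
    (hbdd : ∀ i, ∀ᵐ ω ∂μ, |f (i + 1) ω - f i ω| ≤ 1)
    (hvar : ∀ i, ∀ᵐ ω ∂μ,
      (μ[fun ω' => (f (i + 1) ω' - f i ω') ^ 2 | ℱ i]) ω ≤ v)
    (lam : ℝ) (hlam : 0 < lam) :
    μ {ω | ∃ k ≤ n, lam < |f k ω|}
      ≤ ENNReal.ofReal (2 * Real.exp (-lam ^ 2 / (2 * lam + 2 * n * v))) := by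
  obtain ⟨t, ht0, htineq⟩ := algChoice hlam (by positivity : (0:ℝ) ≤ v * n)
  -- the one-sided bounds
  have hpos := oneSided μ ℱ f hf hf0 n v hv hbdd hvar lam hlam t ht0
  have hneg : μ {ω | ∃ k ≤ n, lam < -(f k ω)}
      ≤ ENNReal.ofReal (Real.exp (-(t * lam - (Real.exp t - 1 - t) * v * n))) := by
    have hm : Martingale (-f) ℱ μ := hf.neg
    have h0 : ∀ ω, (-f) 0 ω = 0 := fun ω => by simp [hf0 ω]
    have hb : ∀ i, ∀ᵐ ω ∂μ, |(-f) (i + 1) ω - (-f) i ω| ≤ 1 := by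
      intro i
      filter_upwards [hbdd i] with ω h
      have : (-f) (i + 1) ω - (-f) i ω = -(f (i + 1) ω - f i ω) := by
        simp only [Pi.neg_apply]; ring
      rw [this, abs_neg]; exact h
    have hva : ∀ i, ∀ᵐ ω ∂μ,
        (μ[fun ω' => ((-f) (i + 1) ω' - (-f) i ω') ^ 2 | ℱ i]) ω ≤ v := by
      intro i
      have he : (fun ω' => ((-f) (i + 1) ω' - (-f) i ω') ^ 2)
          = fun ω' => (f (i + 1) ω' - f i ω') ^ 2 := by
        funext ω'; simp only [Pi.neg_apply]; ring
      rw [he]; exact hvar i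
    exact oneSided μ ℱ (-f) hm h0 n v hv hb hva lam hlam t ht0
  have hsub : {ω | ∃ k ≤ n, lam < |f k ω|} ⊆
      {ω | ∃ k ≤ n, lam < f k ω} ∪ {ω | ∃ k ≤ n, lam < -(f k ω)} := by
    rintro ω ⟨k, hk, hω⟩
    rcases lt_abs.mp hω with h | h
    · exact Or.inl ⟨k, hk, h⟩
    · exact Or.inr ⟨k, hk, h⟩
  have hexp : Real.exp (-(t * lam - (Real.exp t - 1 - t) * v * n))
      ≤ Real.exp (-lam ^ 2 / (2 * lam + 2 * n * v)) := by
    apply Real.exp_le_exp.2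
    rw [neg_div]
    have he : lam ^ 2 / (2 * lam + 2 * (n:ℝ) * v) = lam ^ 2 / (2 * lam + 2 * (v * n)) := by
      ring_nf
    rw [he, mul_assoc]
    linarith
  have hev : {ω | ∃ k ≤ n, lam < -(f k ω)} = {ω | ∃ k ≤ n, lam < (-f) k ω} := by
    simp only [Pi.neg_apply]
  calc μ {ω | ∃ k ≤ n, lam < |f k ω|}
      ≤ μ ({ω | ∃ k ≤ n, lam < f k ω} ∪ {ω | ∃ k ≤ n, lam < -(f k ω)}) := measure_mono hsub
    _ ≤ μ {ω | ∃ k ≤ n, lam < f k ω} + μ {ω | ∃ k ≤ n, lam < -(f k ω)} :=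
        measure_union_le _ _
    _ ≤ ENNReal.ofReal (Real.exp (-(t * lam - (Real.exp t - 1 - t) * v * n)))
        + ENNReal.ofReal (Real.exp (-(t * lam - (Real.exp t - 1 - t) * v * n))) := by
        refine add_le_add hpos ?_
        rw [hev]; exact hneg
    _ = ENNReal.ofReal (2 * Real.exp (-(t * lam - (Real.exp t - 1 - t) * v * n))) := by
        rw [← ENNReal.ofReal_add (Real.exp_nonneg _) (Real.exp_nonneg _), two_mul]
    _ ≤ ENNReal.ofReal (2 * Real.exp (-lam ^ 2 / (2 * lam + 2 * n * v))) :=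
        ENNReal.ofReal_le_ofReal (by linarith)
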